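/- Let r ≥ 1 be an integer and λ ∈ ℂ with λ ≠ 0, and let J be the r×r Jordan block with eigenvalue λ, i.e. J_{ii} = λ for all i, J_{i,i+1} = 1 for all i < r, and all other entries 0. Then the matrices ((r−1)!/(n^{r−1} λ^{n−r+1})) · J^n converge, as n → ∞, to the r×r matrix whose only nonzero entry is a 1 in position (1, r) (the matrix e_1 e_rᵀ). -/

import Mathlib

open Filter Topology Finset

lemma aux_inv : Tendsto (fun n : ℕ => ((n:ℂ))⁻¹) atTop (𝓝 0) :=
  tendsto_inv_atTop_nhds_zero_nat (𝕜 := ℂ)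

lemma aux_desc (k : ℕ) :
    Tendsto (fun n : ℕ => ((n.descFactorial k : ℂ)) / (n:ℂ) ^ k) atTop (𝓝 1) := by
  have h1 : ∀ i : ℕ, Tendsto (fun n : ℕ => ((n:ℂ) - i) / n) atTop (𝓝 1) := by
    intro i
    have h : Tendsto (fun n : ℕ => 1 - (i:ℂ) * ((n:ℂ))⁻¹) atTop (𝓝 1) := by
      simpa using tendsto_const_nhds.sub (tendsto_const_nhds.mul aux_inv)
    refine h.congr' ?_
    filter_upwards [eventually_ge_atTop 1] with n hn
    have hn0 : (n:ℂ) ≠ 0 := by exact_mod_cast Nat.one_le_iff_ne_zero.mp hn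
    field_simp
  have hprod : Tendsto (fun n : ℕ => ∏ i ∈ range k, (((n:ℂ) - i) / n)) atTop
      (𝓝 (∏ _i ∈ range k, (1:ℂ))) := tendsto_finset_prod _ (fun i _ => h1 i)
  rw [prod_const_one] at hprod
  refine hprod.congr' ?_
  filter_upwards [eventually_ge_atTop k] with n hn
  rw [prod_div_distrib, prod_const, card_range, Nat.descFactorial_eq_prod_range, Nat.cast_prod]
  congr 1
  refine prod_congr rfl fun i hi => ?_
  rw [Nat.cast_sub (le_of_lt (lt_of_lt_of_le (mem_range.mp hi) hn))]

lemma aux_choose_div {k m : ℕ} (hk : k < m) :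
    Tendsto (fun n : ℕ => ((n.choose k : ℂ)) / (n:ℂ) ^ m) atTop (𝓝 0) := by
  rw [tendsto_zero_iff_norm_tendsto_zero]
  apply squeeze_zero' (.of_forall fun n => norm_nonneg _)
    (g := fun n : ℕ => 1 / (n:ℝ)) ?_ tendsto_one_div_atTop_nhds_zero_nat
  filter_upwards [eventually_ge_atTop 1] with n hn
  have hn0 : (0:ℝ) < (n:ℝ) := by exact_mod_cast hn
  rw [norm_div, norm_pow, Complex.norm_natCast, Complex.norm_natCast,
    div_le_div_iff₀ (by positivity) hn0, one_mul]
  calc (n.choose k : ℝ) * n ≤ (n:ℝ)^k * n := by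
        gcongr; exact_mod_cast Nat.choose_le_pow n k
    _ = (n:ℝ)^(k+1) := by ring
    _ ≤ (n:ℝ)^m := by
        apply pow_le_pow_right₀ (by exact_mod_cast hn) (by omega)

lemma aux_pow {r : ℕ} (lam : ℂ) (J : Matrix (Fin r) (Fin r) ℂ)
    (hJ : ∀ i j : Fin r,
      J i j = if i = j then lam else if (j : ℕ) = (i : ℕ) + 1 then 1 else 0)
    (n : ℕ) (hn : r ≤ n) (i j : Fin r) :
    (J ^ n) i j = if (i:ℕ) ≤ (j:ℕ) then
      (n.choose ((j:ℕ) - (i:ℕ)) : ℂ) * lam ^ (n - ((j:ℕ) - (i:ℕ))) else 0 := by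
  set N : Matrix (Fin r) (Fin r) ℂ :=
    Matrix.of (fun i j : Fin r => if (j:ℕ) = (i:ℕ) + 1 then (1:ℂ) else 0) with hN
  have hJ' : J = lam • 1 + N := by
    ext a b
    rw [hJ]
    simp only [Matrix.add_apply, Matrix.smul_apply, Matrix.one_apply, hN, Matrix.of_apply,
      smul_eq_mul]
    by_cases h : a = b
    · subst h; simp
    · simp [h]
  have hNpow : ∀ (k : ℕ) (a b : Fin r),
      (N ^ k) a b = if (b:ℕ) = (a:ℕ) + k then 1 else 0 := by
    intro k
    induction k with
    | zero =>
      intro a b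
      simp [Matrix.one_apply, Fin.ext_iff, eq_comm]
    | succ k ih =>
      intro a b
      rw [pow_succ, Matrix.mul_apply]
      simp only [ih]
      simp only [hN, Matrix.of_apply]
      rcases lt_or_ge ((a:ℕ) + k) r with h | h
      · rw [Finset.sum_eq_single (⟨(a:ℕ)+k, h⟩ : Fin r)]
        · simp [add_assoc]
        · intro l _ hl
          have : (l:ℕ) ≠ (a:ℕ) + k := fun he => hl (Fin.ext he)
          simp [this]
        · simp
      · have hb : (b:ℕ) ≠ (a:ℕ) + (k+1) := by have := b.isLt; omega
        rw [Finset.sum_eq_zero, if_neg hb]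
        intro l _
        have : (l:ℕ) ≠ (a:ℕ) + k := by have := l.isLt; omega
        simp [this]
  have hcomm : Commute (lam • (1 : Matrix (Fin r) (Fin r) ℂ)) N :=
    (Commute.one_left N).smul_left lam
  have hentry : (J ^ n) i j = ∑ m ∈ Finset.range (n+1),
      (n.choose m : ℂ) * lam ^ m * (if (j:ℕ) = (i:ℕ) + (n - m) then 1 else 0) := by
    rw [hJ', hcomm.add_pow, Matrix.sum_apply]
    refine Finset.sum_congr rfl fun m hm => ?_
    rw [smul_pow, one_pow, smul_mul_assoc, one_mul,
      ← (Nat.cast_commute (n.choose m) (lam ^ m • N ^ (n - m))).eq, ← nsmul_eq_mul]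
    simp only [Matrix.smul_apply, hNpow, smul_eq_mul, nsmul_eq_mul]
    ring
  rw [hentry]
  by_cases hij : (i:ℕ) ≤ (j:ℕ)
  · rw [if_pos hij]
    have hk : (j:ℕ) - (i:ℕ) ≤ n := by have := j.isLt; omega
    rw [Finset.sum_eq_single (n - ((j:ℕ) - (i:ℕ)))]
    · have h1 : (j:ℕ) = (i:ℕ) + (n - (n - ((j:ℕ) - (i:ℕ)))) := by omega
      rw [if_pos h1, mul_one, Nat.choose_symm hk]
    · intro m hm hmne
      have : (j:ℕ) ≠ (i:ℕ) + (n - m) := by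
        simp only [mem_range] at hm; omega
      rw [if_neg this, mul_zero]
    · intro h
      exact absurd (Finset.mem_range.mpr (by omega)) h
  · rw [if_neg hij]
    apply Finset.sum_eq_zero
    intro m _
    have : (j:ℕ) ≠ (i:ℕ) + (n - m) := by omega
    rw [if_neg this, mul_zero]

/-- for an `r × r` Jordan block `J` with eigenvalue `λ ≠ 0`,
`((r-1)! / (n^{r-1} λ^{n-r+1})) • J^n` converges to the matrix `e₁ eᵣᵀ`. -/
theorem stmt5 {r : ℕ} (hr : 1 ≤ r) (lam : ℂ) (hlam : lam ≠ 0)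
    (J : Matrix (Fin r) (Fin r) ℂ)
    (hJ : ∀ i j : Fin r,
      J i j = if i = j then lam else if (j : ℕ) = (i : ℕ) + 1 then 1 else 0) :
    Tendsto
      (fun n : ℕ =>
        (((Nat.factorial (r - 1) : ℂ)) / ((n : ℂ) ^ (r - 1) * lam ^ ((n : ℤ) - r + 1))) • J ^ n)
      atTop
      (𝓝 (Matrix.single (⟨0, by omega⟩ : Fin r) (⟨r - 1, by omega⟩ : Fin r) 1)) := by
  apply tendsto_pi_nhds.mpr
  intro i
  rw [tendsto_pi_nhds]
  intro j
  simp only [Matrix.smul_apply, smul_eq_mul]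
  by_cases hij : (i:ℕ) ≤ (j:ℕ)
  · have hkr : (j:ℕ) - (i:ℕ) ≤ r - 1 := by have := j.isLt; omega
    have hmain : ∀ᶠ n : ℕ in atTop,
        ((Nat.factorial (r - 1) : ℂ)) / ((n : ℂ) ^ (r - 1) * lam ^ ((n : ℤ) - r + 1)) *
          (J ^ n) i j =
        (((Nat.factorial (r-1) : ℂ) * (n.choose ((j:ℕ) - (i:ℕ)) : ℂ)) / (n:ℂ) ^ (r-1)) *
          lam ^ (r - 1 - ((j:ℕ) - (i:ℕ))) := by
      filter_upwards [eventually_ge_atTop (max r 1)] with n hn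
      have hnr : r ≤ n := le_trans (le_max_left _ _) hn
      have hn1 : 1 ≤ n := le_trans (le_max_right _ _) hn
      have hn0 : (n:ℂ) ≠ 0 := by exact_mod_cast Nat.one_le_iff_ne_zero.mp hn1
      have hkn : (j:ℕ) - (i:ℕ) ≤ n := by omega
      rw [aux_pow lam J hJ n hnr i j, if_pos hij]
      have h1 : lam ^ (n - ((j:ℕ) - (i:ℕ))) =
          lam ^ ((n:ℤ) - (r:ℤ) + 1) * lam ^ ((r:ℤ) - 1 - ((j:ℕ) - (i:ℕ) : ℕ)) := by
        rw [← zpow_add₀ hlam, ← zpow_natCast lam (n - ((j:ℕ) - (i:ℕ)))]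
        congr 1
        omega
      have h2 : lam ^ (r - 1 - ((j:ℕ) - (i:ℕ))) =
          lam ^ ((r:ℤ) - 1 - ((j:ℕ) - (i:ℕ) : ℕ)) := by
        rw [← zpow_natCast]
        congr 1
        omega
      have hL : lam ^ ((n:ℤ) - (r:ℤ) + 1) ≠ 0 := zpow_ne_zero _ hlam
      have hL2 : lam ^ ((r:ℤ) - 1 - ((j:ℕ) - (i:ℕ) : ℕ)) ≠ 0 := zpow_ne_zero _ hlam
      rw [h1, h2]
      field_simp
    by_cases hk1 : (j:ℕ) - (i:ℕ) = r - 1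
    · have hi0 : (i:ℕ) = 0 := by have := j.isLt; omega
      have hj0 : (j:ℕ) = r - 1 := by have := j.isLt; omega
      have htarget : Matrix.single (⟨0, by omega⟩ : Fin r)
          (⟨r - 1, by omega⟩ : Fin r) (1:ℂ) i j = 1 := by
        simp [Matrix.single, Fin.ext_iff, hi0, hj0]
      rw [htarget]
      refine Tendsto.congr' (Filter.EventuallyEq.symm hmain) ?_
      rw [hk1]
      simp only [Nat.sub_self, pow_zero, mul_one]
      refine (aux_desc (r-1)).congr fun n => ?_
      rw [Nat.descFactorial_eq_factorial_mul_choose]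
      push_cast
      ring
    · have htarget : Matrix.single (⟨0, by omega⟩ : Fin r)
          (⟨r - 1, by omega⟩ : Fin r) (1:ℂ) i j = 0 := by
        simp only [Matrix.single, Matrix.of_apply]
        rw [if_neg]
        rintro ⟨h1, h2⟩
        have h1' : (i:ℕ) = 0 := by rw [← h1]
        have h2' : (j:ℕ) = r - 1 := by rw [← h2]
        omega
      rw [htarget]
      refine Tendsto.congr' (Filter.EventuallyEq.symm hmain) ?_
      have hklt : (j:ℕ) - (i:ℕ) < r - 1 := by omega
      have hG := ((aux_choose_div hklt).const_mul ((Nat.factorial (r-1) : ℂ))).mul_const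
        (lam ^ (r - 1 - ((j:ℕ) - (i:ℕ))))
      simp only [mul_zero, zero_mul] at hG
      refine hG.congr fun n => ?_
      ring
  · have htarget : Matrix.single (⟨0, by omega⟩ : Fin r)
        (⟨r - 1, by omega⟩ : Fin r) (1:ℂ) i j = 0 := by
      simp only [Matrix.single, Matrix.of_apply]
      rw [if_neg]
      rintro ⟨h1, h2⟩
      have h1' : (i:ℕ) = 0 := by rw [← h1]
      have h2' : (j:ℕ) = r - 1 := by rw [← h2]
      omega
    rw [htarget]
    have hmain : ∀ᶠ n : ℕ in atTop,
        ((Nat.factorial (r - 1) : ℂ)) / ((n : ℂ) ^ (r - 1) * lam ^ ((n : ℤ) - r + 1)) *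
          (J ^ n) i j = 0 := by
      filter_upwards [eventually_ge_atTop r] with n hn
      rw [aux_pow lam J hJ n hn i j, if_neg hij, mul_zero]
    exact Tendsto.congr' (Filter.EventuallyEq.symm hmain) tendsto_const_nhds
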